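/- If λ is a piecewise linear (not just ℚ-linear) function on |Σ| with λ(b_i) ≥ 0 for all i, then for each integer i, the coefficient of t^i in δ_Q(t; λ) := (1−t)^{d+1}(1 + Σ_{m≥1} Σ_{v ∈ mQ ∩ N} t^{λ(v)+m}) equals the sum of the coefficients of t^j in the weighted δ-vector δ^λ(t) over all rational j with i−1 < j ≤ i. -/

import Mathlib

open scoped Classical

/-- The cone spanned by the rays indexed by `σ`. -/
def coneOf (d r : ℕ) (v : Fin r → Fin d → ℤ) (σ : Finset (Fin r)) : Set (Fin d → ℝ) :=
  {x | ∃ c : Fin r → ℝ, (∀ i, 0 ≤ c i) ∧ (∀ i ∉ σ, c i = 0) ∧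
    ∀ j, x j = ∑ i, c i * (v i j : ℝ)}

/-- The monomial `t^e` with rational exponent, as a Hahn series. -/
noncomputable def tpow (e : ℚ) : HahnSeries ℚ ℚ := HahnSeries.single e 1

/-- Build a Hahn series from a coefficient function (junk value `0` if not well-founded). -/
noncomputable def mkHahn (c : ℚ → ℚ) : HahnSeries ℚ ℚ :=
  if h : (Function.support c).IsPWO then ⟨c, h⟩ else 0

/-- Coefficients of `1 + ∑_{m ≥ 1} ∑_{v ∈ mQ ∩ N} t^{ψ(v)-⌈ψ(v)⌉+λ(v)+m}` (weighted δ-vector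
series). -/
noncomputable def deltaCoeff (d r : ℕ) (v : Fin r → Fin d → ℤ)
    (cones : Finset (Finset (Fin r))) (ψ lam : (Fin d → ℝ) → ℝ) : ℚ → ℚ := fun e =>
  (if e = 0 then 1 else 0) +
  (Set.ncard {p : ℕ × (Fin d → ℤ) |
    1 ≤ p.1 ∧ (∃ σ ∈ cones, (fun j => (p.2 j : ℝ)) ∈ coneOf d r v σ) ∧
    ψ (fun j => (p.2 j : ℝ)) ≤ (p.1 : ℝ) ∧
    ψ (fun j => (p.2 j : ℝ)) - ⌈ψ (fun j => (p.2 j : ℝ))⌉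
      + lam (fun j => (p.2 j : ℝ)) + (p.1 : ℝ) = (e : ℝ)} : ℚ)

/-- Coefficients of `1 + ∑_{m ≥ 1} ∑_{v ∈ mQ ∩ N} t^{λ(v)+m}` (the series defining
`δ_Q(t; λ)`). -/
noncomputable def deltaQCoeff (d r : ℕ) (v : Fin r → Fin d → ℤ)
    (cones : Finset (Finset (Fin r))) (ψ lam : (Fin d → ℝ) → ℝ) : ℚ → ℚ := fun e =>
  (if e = 0 then 1 else 0) +
  (Set.ncard {p : ℕ × (Fin d → ℤ) |
    1 ≤ p.1 ∧ (∃ σ ∈ cones, (fun j => (p.2 j : ℝ)) ∈ coneOf d r v σ) ∧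
    ψ (fun j => (p.2 j : ℝ)) ≤ (p.1 : ℝ) ∧
    lam (fun j => (p.2 j : ℝ)) + (p.1 : ℝ) = (e : ℝ)} : ℚ)

/-! ### Auxiliary lemmas: Hahn series -/

lemma mkHahn_coeff (c : ℚ → ℚ) (h : (Function.support c).IsPWO) :
    (mkHahn c).coeff = c := by
  simp [mkHahn, h]

lemma coeff_tpow_mul (X : HahnSeries ℚ ℚ) (e a : ℚ) :
    (tpow a * X).coeff e = X.coeff (e - a) := by
  have := HahnSeries.coeff_single_mul_add (r := (1:ℚ)) (x := X) (a := e - a) (b := a)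
  simpa [tpow, sub_add_cancel] using this

lemma coeff_one_sub_pow (n : ℕ) (X : HahnSeries ℚ ℚ) (e : ℚ) :
    ((1 - tpow 1) ^ n * X).coeff e
      = ∑ k ∈ Finset.range (n + 1), (-1 : ℚ) ^ k * (n.choose k) * X.coeff (e - k) := by
  induction n generalizing X e with
  | zero => simp
  | succ n ih =>
    have h1 : ((1 - tpow 1) ^ (n + 1) * X) = (1 - tpow 1) ^ n * ((1 - tpow 1) * X) := by
      ring
    have h2 : ∀ e : ℚ, ((1 - tpow 1) * X).coeff e = X.coeff e - X.coeff (e - 1) := by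
      intro e
      rw [sub_mul, one_mul, HahnSeries.coeff_sub, coeff_tpow_mul]
    rw [h1, ih]
    simp only [h2]
    have expand : ∀ k : ℕ, (-1 : ℚ) ^ k * (n.choose k) * (X.coeff (e - k) - X.coeff (e - k - 1))
        = (-1:ℚ)^k * (n.choose k) * X.coeff (e - k)
          + (-1:ℚ)^(k+1) * (n.choose k) * X.coeff (e - (k+1 : ℕ)) := by
      intro k
      have : e - (k:ℚ) - 1 = e - ((k+1 : ℕ) : ℚ) := by push_cast; ring
      rw [this]; ring
    simp only [expand]
    rw [Finset.sum_add_distrib]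
    rw [Finset.sum_range_succ' (fun k => (-1:ℚ)^k * ((n+1).choose k) * X.coeff (e - k)) (n+1)]
    have pascal : ∀ k : ℕ, (-1:ℚ)^(k+1) * ((n+1).choose (k+1)) * X.coeff (e - (k+1:ℕ))
        = (-1:ℚ)^(k+1) * (n.choose (k+1)) * X.coeff (e - (k+1:ℕ))
          + (-1:ℚ)^(k+1) * (n.choose k) * X.coeff (e - (k+1:ℕ)) := by
      intro k
      rw [Nat.choose_succ_succ]
      push_cast
      ring
    simp only [pascal]
    rw [Finset.sum_add_distrib]
    have shift : ∑ k ∈ Finset.range (n+1), (-1:ℚ)^(k+1) * (n.choose (k+1)) * X.coeff (e - (k+1:ℕ))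
        = ∑ k ∈ Finset.range (n+1), (-1:ℚ)^k * (n.choose k) * X.coeff (e - k)
          - (-1:ℚ)^0 * (n.choose 0) * X.coeff (e - ((0:ℕ):ℚ)) := by
      rw [Finset.sum_range_succ (fun k => (-1:ℚ)^(k+1) * (n.choose (k+1)) * X.coeff (e-(k+1:ℕ))) n,
          Finset.sum_range_succ' (fun k => (-1:ℚ)^k * (n.choose k) * X.coeff (e - k)) n]
      simp [Nat.choose_succ_self]
    rw [shift]
    push_cast [Nat.choose_zero_right]
    ring

/-! ### Auxiliary lemmas: geometry -/

section Geo

variable {d r : ℕ} {v : Fin r → Fin d → ℤ} {cones : Finset (Finset (Fin r))}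
  {a : Fin r → ℕ} {ψ lam : (Fin d → ℝ) → ℝ}

lemma b_mem_cone {σ : Finset (Fin r)} {i : Fin r} (hi : i ∈ σ) :
    (fun j => (a i : ℝ) * (v i j : ℝ)) ∈ coneOf d r v σ := by
  refine ⟨fun k => if k = i then (a i : ℝ) else 0, ?_, ?_, ?_⟩
  · intro k; by_cases h : k = i <;> simp [h]
  · intro k hk; simp only [ite_eq_right_iff]; rintro rfl; exact absurd hi hk
  · intro j
    rw [Finset.sum_eq_single i]
    · simp
    · intro k _ hk; simp [hk]
    · simp

lemma eval_le {σ : Finset (Fin r)} (hσ : σ ∈ cones) {x : Fin d → ℝ}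
    (hx : x ∈ coneOf d r v σ) (ha : ∀ i, 0 < a i)
    (hflin : ∀ σ ∈ cones, ∃ ℓ : (Fin d → ℝ) →ₗ[ℝ] ℝ, ∀ y ∈ coneOf d r v σ, lam y = ℓ y)
    (hfb : ∀ i, 0 ≤ lam (fun j => (a i : ℝ) * (v i j : ℝ))) :
    0 ≤ lam x := by
  obtain ⟨ℓ, hℓ⟩ := hflin σ hσ
  obtain ⟨c, hc0, hcσ, hcx⟩ := hx
  have hxsum : x = ∑ i, c i • (fun j => (v i j : ℝ)) := by
    funext j
    rw [Finset.sum_apply]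
    simpa using hcx j
  have hℓx : ℓ x = ∑ i, c i * ℓ (fun j => (v i j : ℝ)) := by
    rw [hxsum, map_sum]
    simp [map_smul]
  rw [hℓ x ⟨c, hc0, hcσ, hcx⟩, hℓx]
  apply Finset.sum_nonneg
  intro i _
  by_cases hi : i ∈ σ
  · have hb : lam (fun j => (a i : ℝ) * (v i j : ℝ)) = ℓ (fun j => (a i : ℝ) * (v i j : ℝ)) :=
      hℓ _ (b_mem_cone hi)
    have : ℓ (fun j => (a i : ℝ) * (v i j : ℝ)) = (a i : ℝ) * ℓ (fun j => (v i j : ℝ)) := by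
      have : (fun j => (a i : ℝ) * (v i j : ℝ)) = (a i : ℝ) • (fun j => (v i j : ℝ)) := by
        funext j; simp
      rw [this, map_smul]; rfl
    have hnn : 0 ≤ (a i : ℝ) * ℓ (fun j => (v i j : ℝ)) := by
      rw [← this, ← hb]; exact hfb i
    have hai : (0:ℝ) < (a i : ℝ) := by exact_mod_cast ha i
    have hv : 0 ≤ ℓ (fun j => (v i j : ℝ)) := by
      by_contra hneg
      push_neg at hneg
      nlinarith
    exact mul_nonneg (hc0 i) hv
  · simp [hcσ i hi]

lemma psi_bound {σ : Finset (Fin r)} (hσ : σ ∈ cones) {x : Fin d → ℝ}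
    (hx : x ∈ coneOf d r v σ) (ha : ∀ i, 0 < a i)
    (hψlin : ∀ σ ∈ cones, ∃ ℓ : (Fin d → ℝ) →ₗ[ℝ] ℝ, ∀ y ∈ coneOf d r v σ, ψ y = ℓ y)
    (hψb : ∀ i, ψ (fun j => (a i : ℝ) * (v i j : ℝ)) = 1) :
    0 ≤ ψ x ∧ ∀ j, |x j| ≤ ψ x * ∑ i, (a i : ℝ) * |(v i j : ℝ)| := by
  obtain ⟨ℓ, hℓ⟩ := hψlin σ hσ
  obtain ⟨c, hc0, hcσ, hcx⟩ := hx
  have hxsum : x = ∑ i, c i • (fun j => (v i j : ℝ)) := by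
    funext j
    rw [Finset.sum_apply]
    simpa using hcx j
  have hℓx : ψ x = ∑ i, c i * ℓ (fun j => (v i j : ℝ)) := by
    rw [hℓ x ⟨c, hc0, hcσ, hcx⟩, hxsum, map_sum]
    simp [map_smul]
  have hval : ∀ i ∈ σ, ℓ (fun j => (v i j : ℝ)) = 1 / (a i : ℝ) := by
    intro i hi
    have hai : (0:ℝ) < (a i : ℝ) := by exact_mod_cast ha i
    have hb : ψ (fun j => (a i : ℝ) * (v i j : ℝ)) = ℓ (fun j => (a i : ℝ) * (v i j : ℝ)) :=
      hℓ _ (b_mem_cone hi)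
    have hsm : ℓ (fun j => (a i : ℝ) * (v i j : ℝ)) = (a i : ℝ) * ℓ (fun j => (v i j : ℝ)) := by
      have : (fun j => (a i : ℝ) * (v i j : ℝ)) = (a i : ℝ) • (fun j => (v i j : ℝ)) := by
        funext j; simp
      rw [this, map_smul]; rfl
    have := hψb i
    rw [hb, hsm] at this
    field_simp
    linarith
  have hterm : ∀ i, i ∈ (Finset.univ : Finset (Fin r)) → 0 ≤ c i * ℓ (fun j => (v i j : ℝ)) := by
    intro i _
    by_cases hi : i ∈ σ
    · rw [hval i hi]
      have hai : (0:ℝ) < (a i : ℝ) := by exact_mod_cast ha i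
      exact mul_nonneg (hc0 i) (by positivity)
    · simp [hcσ i hi]
  have hψ0 : 0 ≤ ψ x := by
    rw [hℓx]; exact Finset.sum_nonneg hterm
  refine ⟨hψ0, ?_⟩
  have hcbound : ∀ i, c i ≤ (a i : ℝ) * ψ x := by
    intro i
    by_cases hi : i ∈ σ
    · have hai : (0:ℝ) < (a i : ℝ) := by exact_mod_cast ha i
      have h1 : c i * ℓ (fun j => (v i j : ℝ)) ≤ ψ x := by
        rw [hℓx]
        exact Finset.single_le_sum hterm (Finset.mem_univ i)
      rw [hval i hi] at h1
      calc c i = (a i : ℝ) * (c i * (1 / (a i : ℝ))) := by field_simp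
        _ ≤ (a i : ℝ) * ψ x := mul_le_mul_of_nonneg_left h1 hai.le
    · rw [hcσ i hi]; positivity
  intro j
  calc |x j| = |∑ i, c i * (v i j : ℝ)| := by rw [hcx j]
    _ ≤ ∑ i, |c i * (v i j : ℝ)| := Finset.abs_sum_le_sum_abs _ _
    _ ≤ ∑ i, ((a i : ℝ) * ψ x) * |(v i j : ℝ)| := by
        apply Finset.sum_le_sum
        intro i _
        rw [abs_mul, abs_of_nonneg (hc0 i)]
        exact mul_le_mul_of_nonneg_right (hcbound i) (abs_nonneg _)
    _ = ψ x * ∑ i, (a i : ℝ) * |(v i j : ℝ)| := by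
        rw [Finset.mul_sum]; apply Finset.sum_congr rfl; intro i _; ring

lemma pairs_finite (M : ℝ) (ha : ∀ i, 0 < a i)
    (hψlin : ∀ σ ∈ cones, ∃ ℓ : (Fin d → ℝ) →ₗ[ℝ] ℝ, ∀ y ∈ coneOf d r v σ, ψ y = ℓ y)
    (hψb : ∀ i, ψ (fun j => (a i : ℝ) * (v i j : ℝ)) = 1) :
    {p : ℕ × (Fin d → ℤ) | ((p.1 : ℝ) ≤ M ∧ ∃ σ ∈ cones, (fun j => (p.2 j : ℝ)) ∈ coneOf d r v σ)
      ∧ ψ (fun j => (p.2 j : ℝ)) ≤ M}.Finite := by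
  classical
  set B : Fin d → ℝ := fun j => M * ∑ i, (a i : ℝ) * |(v i j : ℝ)| with hB
  have hsub : {p : ℕ × (Fin d → ℤ) |
      ((p.1 : ℝ) ≤ M ∧ ∃ σ ∈ cones, (fun j => (p.2 j : ℝ)) ∈ coneOf d r v σ)
      ∧ ψ (fun j => (p.2 j : ℝ)) ≤ M} ⊆
      (Set.Iic ⌈M⌉₊) ×ˢ (Set.univ.pi (fun j => Set.Icc (-⌈B j⌉) ⌈B j⌉)) := by
    rintro ⟨m, w⟩ ⟨⟨hm, σ, hσ, hw⟩, hψM⟩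
    constructor
    · simp only [Set.mem_Iic]
      have := Nat.le_ceil M
      exact_mod_cast le_trans hm this
    · intro j _
      obtain ⟨h0, hbd⟩ := psi_bound hσ hw ha hψlin hψb
      have h1 : |(w j : ℝ)| ≤ B j := by
        refine le_trans (hbd j) ?_
        apply mul_le_mul_of_nonneg_right hψM
        positivity
      have h2 : |(w j : ℝ)| ≤ (⌈B j⌉ : ℝ) := le_trans h1 (Int.le_ceil _)
      rw [← Int.cast_abs] at h2
      have h3 : |w j| ≤ ⌈B j⌉ := by exact_mod_cast h2
      exact abs_le.mp h3
  exact Set.Finite.subset (Set.Finite.prod (Set.finite_Iic _)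
    (Set.Finite.pi (fun j => Set.finite_Icc _ _))) hsub

end Geo

/-! ### Auxiliary lemmas: finiteness and PWO -/

lemma finite_of_exists_witness {α β : Type*} {s : Set α} {T : Set β} (hT : T.Finite)
    (F : α → β → Prop) (h1 : ∀ a ∈ s, ∃ b ∈ T, F a b)
    (h2 : ∀ a ∈ s, ∀ a' ∈ s, ∀ b, F a b → F a' b → a = a') : s.Finite := by
  classical
  have h1' : ∀ x : s, ∃ b : T, F x.1 b.1 := by
    rintro ⟨x, hx⟩
    obtain ⟨b, hb, hFb⟩ := h1 x hx
    exact ⟨⟨b, hb⟩, hFb⟩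
  choose g hg using h1'
  have hinj : Function.Injective g := by
    rintro x y hxy
    exact Subtype.ext (h2 _ x.2 _ y.2 _ (hg x) (hxy ▸ hg y))
  haveI := hT.to_subtype
  exact Set.finite_coe_iff.mp (Finite.of_injective g hinj)

lemma isPWO_of_finite_iic {s : Set ℚ} (h : ∀ M : ℚ, (s ∩ Set.Iic M).Finite) : s.IsPWO := by
  apply Set.IsWF.isPWO
  rw [Set.isWF_iff_no_descending_seq]
  intro f hf hmem
  have hsub : Set.range f ⊆ s ∩ Set.Iic (f 0) := by
    rintro x ⟨n, rfl⟩
    exact ⟨hmem n, hf.antitone (Nat.zero_le n)⟩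
  exact Set.infinite_range_of_injective hf.injective ((h (f 0)).subset hsub)

/-! ### Main theorem -/

theorem stmt_9 (d r : ℕ) (v : Fin r → Fin d → ℤ)
    (cones : Finset (Finset (Fin r)))
    (hdown : ∀ σ ∈ cones, ∀ τ ⊆ σ, τ ∈ cones)
    (hindep : ∀ σ ∈ cones, LinearIndependent ℝ (fun i : σ => fun j => (v i j : ℝ)))
    (hfan : ∀ σ ∈ cones, ∀ τ ∈ cones,
      coneOf d r v σ ∩ coneOf d r v τ = coneOf d r v (σ ∩ τ))
    (hconvex : Convex ℝ (⋃ σ ∈ cones, coneOf d r v σ))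
    (a : Fin r → ℕ) (ha : ∀ i, 0 < a i)
    (ψ lam : (Fin d → ℝ) → ℝ)
    (hψlin : ∀ σ ∈ cones, ∃ ℓ : (Fin d → ℝ) →ₗ[ℝ] ℝ, ∀ x ∈ coneOf d r v σ, ψ x = ℓ x)
    (hψb : ∀ i, ψ (fun j => (a i : ℝ) * (v i j : ℝ)) = 1)
    -- `ψ` takes rational values on lattice points
    (hψrat : ∀ w : Fin d → ℤ, ∃ c : ℚ, ψ (fun j => (w j : ℝ)) = (c : ℝ))
    (hlamlin : ∀ σ ∈ cones, ∃ ℓ : (Fin d → ℝ) →ₗ[ℝ] ℝ, ∀ x ∈ coneOf d r v σ, lam x = ℓ x)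
    -- `λ` is piecewise *linear*: it takes integer values on lattice points
    (hlamint : ∀ w : Fin d → ℤ, ∃ z : ℤ, lam (fun j => (w j : ℝ)) = (z : ℝ))
    (hlamb : ∀ i, 0 ≤ lam (fun j => (a i : ℝ) * (v i j : ℝ))) :
    ∀ i : ℤ,
      ((1 - tpow 1) ^ (d + 1) * mkHahn (deltaQCoeff d r v cones ψ lam)).coeff (i : ℚ)
        = ∑ᶠ j ∈ Set.Ioc ((i : ℚ) - 1) (i : ℚ),
            ((1 - tpow 1) ^ (d + 1) * mkHahn (deltaCoeff d r v cones ψ lam)).coeff j := by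
  classical
  -- Abbreviations
  set QCf := deltaQCoeff d r v cones ψ lam with hQCfdef
  set DCf := deltaCoeff d r v cones ψ lam with hDCfdef
  set SQ : ℚ → Set (ℕ × (Fin d → ℤ)) := fun e => {p : ℕ × (Fin d → ℤ) |
    1 ≤ p.1 ∧ (∃ σ ∈ cones, (fun j => (p.2 j : ℝ)) ∈ coneOf d r v σ) ∧
    ψ (fun j => (p.2 j : ℝ)) ≤ (p.1 : ℝ) ∧
    lam (fun j => (p.2 j : ℝ)) + (p.1 : ℝ) = (e : ℝ)} with hSQdef
  set SD : ℚ → Set (ℕ × (Fin d → ℤ)) := fun e => {p : ℕ × (Fin d → ℤ) |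
    1 ≤ p.1 ∧ (∃ σ ∈ cones, (fun j => (p.2 j : ℝ)) ∈ coneOf d r v σ) ∧
    ψ (fun j => (p.2 j : ℝ)) ≤ (p.1 : ℝ) ∧
    ψ (fun j => (p.2 j : ℝ)) - ⌈ψ (fun j => (p.2 j : ℝ))⌉
      + lam (fun j => (p.2 j : ℝ)) + (p.1 : ℝ) = (e : ℝ)} with hSDdef
  have hQdef : ∀ e : ℚ, QCf e = (if e = 0 then 1 else 0) + ((SQ e).ncard : ℚ) := fun _ => rfl
  have hDdef : ∀ e : ℚ, DCf e = (if e = 0 then 1 else 0) + ((SD e).ncard : ℚ) := fun _ => rfl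
  -- nonnegativity of `lam` on cones
  have hlam0 : ∀ p : ℕ × (Fin d → ℤ),
      (∃ σ ∈ cones, (fun j => (p.2 j : ℝ)) ∈ coneOf d r v σ) →
      0 ≤ lam (fun j => (p.2 j : ℝ)) := by
    rintro p ⟨σ, hσ, hw⟩
    exact eval_le hσ hw ha hlamlin hlamb
  -- finiteness of the slice sets
  have hSQfin : ∀ e : ℚ, (SQ e).Finite := by
    intro e
    apply (pairs_finite (v := v) (cones := cones) (a := a) (ψ := ψ) ((e : ℝ)) ha hψlin hψb).subset
    rintro ⟨m, w⟩ ⟨h1, h2, h3, h4⟩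
    have hl : 0 ≤ lam (fun j => (w j : ℝ)) := hlam0 (m, w) h2
    have hm : (m : ℝ) ≤ (e : ℝ) := by linarith
    exact ⟨⟨hm, h2⟩, le_trans h3 hm⟩
  have hSDfin : ∀ e : ℚ, (SD e).Finite := by
    intro e
    apply (pairs_finite (v := v) (cones := cones) (a := a) (ψ := ψ) ((e : ℝ) + 1)
      ha hψlin hψb).subset
    rintro ⟨m, w⟩ ⟨h1, h2, h3, h4⟩
    have hl : 0 ≤ lam (fun j => (w j : ℝ)) := hlam0 (m, w) h2
    have hceil := Int.ceil_lt_add_one (ψ (fun j => (w j : ℝ)))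
    have hm : (m : ℝ) ≤ (e : ℝ) + 1 := by linarith
    exact ⟨⟨hm, h2⟩, le_trans h3 hm⟩
  -- nonvanishing from nonemptiness
  have hDnz : ∀ j : ℚ, (SD j).Nonempty → DCf j ≠ 0 := by
    intro j hne
    have h1 : 0 < ((SD j).ncard : ℚ) := by
      exact_mod_cast (Set.ncard_pos (hSDfin j)).mpr hne
    rw [hDdef]
    have h0 : (0:ℚ) ≤ if j = 0 then 1 else 0 := by split <;> norm_num
    exact (add_pos_of_nonneg_of_pos h0 h1).ne'
  -- support finiteness on lower intervals
  have hQsupp : ∀ M : ℚ, (Function.support QCf ∩ Set.Iic M).Finite := by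
    intro M
    have hrest : ((Function.support QCf ∩ Set.Iic M) \ {0}).Finite := by
      apply finite_of_exists_witness
        (pairs_finite (v := v) (cones := cones) (a := a) (ψ := ψ) (max (M : ℝ) 0) ha hψlin hψb)
        (fun e p => p ∈ SQ e)
      · rintro e ⟨⟨hsupp, hle⟩, hne⟩
        simp only [Set.mem_singleton_iff] at hne
        have hnc : ((SQ e).ncard : ℚ) ≠ 0 := by
          intro h0
          apply hsupp
          rw [hQdef, h0, if_neg hne, add_zero]
        obtain ⟨p, hp⟩ := Set.nonempty_of_ncard_ne_zero (by exact_mod_cast hnc)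
        refine ⟨p, ?_, hp⟩
        obtain ⟨h1, h2, h3, h4⟩ := hp
        have hl : 0 ≤ lam (fun j => (p.2 j : ℝ)) := hlam0 p h2
        have heM : (e : ℝ) ≤ max (M : ℝ) 0 := by
          have : (e : ℝ) ≤ (M : ℝ) := by exact_mod_cast hle
          exact le_trans this (le_max_left _ _)
        have hm : (p.1 : ℝ) ≤ max (M : ℝ) 0 := by linarith
        exact ⟨⟨hm, h2⟩, le_trans h3 hm⟩
      · rintro e he e' he' p hp hp'
        have h4 := hp.2.2.2
        have h4' := hp'.2.2.2
        have : (e : ℝ) = (e' : ℝ) := by rw [← h4, ← h4']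
        exact_mod_cast this
    have : Function.support QCf ∩ Set.Iic M ⊆
        insert 0 ((Function.support QCf ∩ Set.Iic M) \ {0}) := by
      intro x hx
      by_cases h : x = 0
      · exact Set.mem_insert_iff.mpr (Or.inl h)
      · exact Set.mem_insert_iff.mpr (Or.inr ⟨hx, h⟩)
    exact (hrest.insert 0).subset this
  have hDsupp : ∀ M : ℚ, (Function.support DCf ∩ Set.Iic M).Finite := by
    intro M
    have hrest : ((Function.support DCf ∩ Set.Iic M) \ {0}).Finite := by
      apply finite_of_exists_witness
        (pairs_finite (v := v) (cones := cones) (a := a) (ψ := ψ) (max ((M : ℝ) + 1) 0)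
          ha hψlin hψb)
        (fun e p => p ∈ SD e)
      · rintro e ⟨⟨hsupp, hle⟩, hne⟩
        simp only [Set.mem_singleton_iff] at hne
        have hnc : ((SD e).ncard : ℚ) ≠ 0 := by
          intro h0
          apply hsupp
          rw [hDdef, h0, if_neg hne, add_zero]
        obtain ⟨p, hp⟩ := Set.nonempty_of_ncard_ne_zero (by exact_mod_cast hnc)
        refine ⟨p, ?_, hp⟩
        obtain ⟨h1, h2, h3, h4⟩ := hp
        have hl : 0 ≤ lam (fun j => (p.2 j : ℝ)) := hlam0 p h2
        have hceil := Int.ceil_lt_add_one (ψ (fun j => (p.2 j : ℝ)))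
        have heM : (e : ℝ) + 1 ≤ max ((M : ℝ) + 1) 0 := by
          have : (e : ℝ) ≤ (M : ℝ) := by exact_mod_cast hle
          have := le_max_left ((M : ℝ) + 1) 0
          linarith
        have hm : (p.1 : ℝ) ≤ max ((M : ℝ) + 1) 0 := by linarith
        exact ⟨⟨hm, h2⟩, le_trans h3 hm⟩
      · rintro e he e' he' p hp hp'
        have h4 := hp.2.2.2
        have h4' := hp'.2.2.2
        have : (e : ℝ) = (e' : ℝ) := by rw [← h4, ← h4']
        exact_mod_cast this
    have : Function.support DCf ∩ Set.Iic M ⊆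
        insert 0 ((Function.support DCf ∩ Set.Iic M) \ {0}) := by
      intro x hx
      by_cases h : x = 0
      · exact Set.mem_insert_iff.mpr (Or.inl h)
      · exact Set.mem_insert_iff.mpr (Or.inr ⟨hx, h⟩)
    exact (hrest.insert 0).subset this
  have hQpwo : (Function.support QCf).IsPWO := isPWO_of_finite_iic hQsupp
  have hDpwo : (Function.support DCf).IsPWO := isPWO_of_finite_iic hDsupp
  have hAco : (mkHahn QCf).coeff = QCf := mkHahn_coeff _ hQpwo
  have hBco : (mkHahn DCf).coeff = DCf := mkHahn_coeff _ hDpwo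
  -- rational values
  choose ψq hψq using hψrat
  choose lamz hlamz using hlamint
  set E : ℕ × (Fin d → ℤ) → ℚ :=
    fun p => ψq p.2 - ⌈ψq p.2⌉ + lamz p.2 + p.1 with hEdef
  have hE : ∀ p : ℕ × (Fin d → ℤ),
      ψ (fun j => (p.2 j : ℝ)) - ⌈ψ (fun j => (p.2 j : ℝ))⌉
        + lam (fun j => (p.2 j : ℝ)) + (p.1 : ℝ) = ((E p : ℚ) : ℝ) := by
    intro p
    rw [hψq, hlamz, Rat.ceil_cast, hEdef]
    push_cast
    ring
  have hEbound : ∀ p : ℕ × (Fin d → ℤ),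
      ((lamz p.2 + (p.1 : ℤ) : ℤ) : ℚ) - 1 < E p ∧ E p ≤ ((lamz p.2 + (p.1 : ℤ) : ℤ) : ℚ) := by
    intro p
    have h1 : ψq p.2 ≤ (⌈ψq p.2⌉ : ℚ) := Int.le_ceil _
    have h2 : (⌈ψq p.2⌉ : ℚ) < ψq p.2 + 1 := Int.ceil_lt_add_one _
    rw [hEdef]
    push_cast
    constructor <;> linarith
  -- key correspondence lemmas
  have haux1 : ∀ (n : ℤ) (p : ℕ × (Fin d → ℤ)), p ∈ SQ ((n : ℚ)) →
      lamz p.2 + (p.1 : ℤ) = n ∧ p ∈ SD (E p) := by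
    rintro n p ⟨h1, h2, h3, h4⟩
    have hn : lamz p.2 + (p.1 : ℤ) = n := by
      have : ((lamz p.2 : ℤ) : ℝ) + (p.1 : ℝ) = ((n : ℤ) : ℝ) := by
        rw [← hlamz]
        exact_mod_cast h4
      exact_mod_cast this
    exact ⟨hn, h1, h2, h3, hE p⟩
  have haux2 : ∀ (n : ℤ) (j : ℚ), (n : ℚ) - 1 < j → j ≤ (n : ℚ) →
      ∀ p : ℕ × (Fin d → ℤ), p ∈ SD j ↔ p ∈ SQ ((n : ℚ)) ∧ E p = j := by
    intro n j hj1 hj2 p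
    constructor
    · rintro ⟨h1, h2, h3, h4⟩
      have hEj : E p = j := by
        have : ((E p : ℚ) : ℝ) = (j : ℝ) := by rw [← hE p, h4]
        exact_mod_cast this
      have hb := hEbound p
      rw [hEj] at hb
      have hn : lamz p.2 + (p.1 : ℤ) = n := by
        have hlt : ((lamz p.2 + (p.1 : ℤ) : ℤ) : ℚ) < (n : ℚ) + 1 := by
          calc ((lamz p.2 + (p.1 : ℤ) : ℤ) : ℚ) < j + 1 := by linarith [hb.1]
            _ ≤ (n : ℚ) + 1 := by linarith
        have hgt : (n : ℚ) - 1 < ((lamz p.2 + (p.1 : ℤ) : ℤ) : ℚ) := by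
          linarith [hb.2]
        have hlt' : lamz p.2 + (p.1 : ℤ) < n + 1 := by exact_mod_cast hlt
        have hgt' : n - 1 < lamz p.2 + (p.1 : ℤ) := by exact_mod_cast hgt
        omega
      have h4' : lam (fun j => (p.2 j : ℝ)) + (p.1 : ℝ) = (((n : ℚ)) : ℝ) := by
        rw [hlamz]
        have : ((lamz p.2 + (p.1 : ℤ) : ℤ) : ℝ) = ((n : ℤ) : ℝ) := by exact_mod_cast hn
        push_cast at this ⊢
        linarith
      exact ⟨⟨h1, h2, h3, h4'⟩, hEj⟩
    · rintro ⟨⟨h1, h2, h3, h4⟩, hEj⟩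
      refine ⟨h1, h2, h3, ?_⟩
      rw [← hEj]
      exact hE p
  -- the core counting identity
  have core : ∀ (n : ℤ) (s : Finset ℚ), (∀ j ∈ s, (n : ℚ) - 1 < j ∧ j ≤ (n : ℚ)) →
      (∀ j : ℚ, (n : ℚ) - 1 < j → j ≤ (n : ℚ) → DCf j ≠ 0 → j ∈ s) →
      ∑ j ∈ s, DCf j = QCf ((n : ℚ)) := by
    intro n s hmem hcov
    set F := (hSQfin ((n : ℚ))).toFinset with hF
    have hmapsto : ∀ p ∈ F, E p ∈ s := by
      intro p hp
      rw [Set.Finite.mem_toFinset] at hp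
      obtain ⟨hn, hpSD⟩ := haux1 n p hp
      have hb := hEbound p
      rw [hn] at hb
      exact hcov (E p) (by linarith [hb.1]) hb.2 (hDnz (E p) ⟨p, hpSD⟩)
    have hcard := Finset.card_eq_sum_card_fiberwise hmapsto
    have hfiber : ∀ j ∈ s, (F.filter (fun p => E p = j)).card = (SD j).ncard := by
      intro j hj
      obtain ⟨hj1, hj2⟩ := hmem j hj
      have : F.filter (fun p => E p = j) = (hSDfin j).toFinset := by
        ext p
        simp only [Finset.mem_filter, Set.Finite.mem_toFinset, hF]
        rw [haux2 n j hj1 hj2 p]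
      rw [this, Set.ncard_eq_toFinset_card _ (hSDfin j)]
    -- indicator part
    have hind : (∑ j ∈ s, (if j = 0 then (1:ℚ) else 0)) = if (n : ℚ) = 0 then 1 else 0 := by
      rw [Finset.sum_ite_eq' s (0 : ℚ) (fun _ => (1:ℚ))]
      by_cases hn : n = 0
      · subst hn
        have h0s : (0 : ℚ) ∈ s := by
          apply hcov 0 (by norm_num) (by norm_num)
          rw [hDdef]
          have hpos : (0:ℚ) < (if (0:ℚ) = 0 then (1:ℚ) else 0) + ((SD 0).ncard : ℚ) := by
            rw [if_pos rfl]
            positivity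
          exact hpos.ne'
        simp [h0s]
      · have h0s : (0 : ℚ) ∉ s := by
          intro h0
          obtain ⟨hlt, hle⟩ := hmem 0 h0
          have : n = 0 := by
            have h1 : (0:ℤ) ≤ n := by exact_mod_cast hle
            have h2 : (n:ℚ) < 1 := by linarith
            have h2' : n < 1 := by exact_mod_cast h2
            omega
          exact hn this
        have hnq : ((n:ℚ)) ≠ 0 := by exact_mod_cast hn
        simp [h0s, hnq]
    calc ∑ j ∈ s, DCf j
        = ∑ j ∈ s, ((if j = 0 then (1:ℚ) else 0) + ((SD j).ncard : ℚ)) := by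
          apply Finset.sum_congr rfl; intro j _; exact hDdef j
      _ = (∑ j ∈ s, (if j = 0 then (1:ℚ) else 0)) + ∑ j ∈ s, ((SD j).ncard : ℚ) :=
          Finset.sum_add_distrib
      _ = (if (n : ℚ) = 0 then 1 else 0) + ((SQ ((n : ℚ))).ncard : ℚ) := by
          rw [hind]
          congr 1
          have : ∑ j ∈ s, ((SD j).ncard : ℚ) = ((∑ j ∈ s, (SD j).ncard : ℕ) : ℚ) := by
            push_cast; ring
          rw [this]
          have hsum : ∑ j ∈ s, (SD j).ncard = (SQ ((n : ℚ))).ncard := by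
            rw [Set.ncard_eq_toFinset_card _ (hSQfin ((n : ℚ))), ← hF, hcard]
            apply Finset.sum_congr rfl
            intro j hj
            exact (hfiber j hj).symm
          rw [hsum]
      _ = QCf ((n : ℚ)) := (hQdef _).symm
  -- main assembly
  intro i
  have hLHS : ((1 - tpow 1) ^ (d + 1) * mkHahn QCf).coeff ((i : ℚ))
      = ∑ k ∈ Finset.range (d + 2), (-1:ℚ)^k * ((d+1).choose k) * QCf ((i : ℚ) - k) := by
    rw [coeff_one_sub_pow, hAco]
  set g : ℚ → ℚ := fun j => ((1 - tpow 1) ^ (d + 1) * mkHahn DCf).coeff j with hgdef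
  have hg : ∀ j : ℚ, g j = ∑ k ∈ Finset.range (d + 2),
      (-1:ℚ)^k * ((d+1).choose k) * DCf (j - k) := by
    intro j
    rw [hgdef]
    simp only
    rw [coeff_one_sub_pow, hBco]
  set T0 := (hDsupp ((i : ℚ))).toFinset with hT0
  set U := ((Finset.range (d + 2)).biUnion
      (fun k => T0.image (fun x => x + (k : ℚ)))).filter
      (fun j => j ∈ Set.Ioc ((i : ℚ) - 1) ((i : ℚ))) with hU
  -- the finsum is a finite sum over U
  have hfin : ∑ᶠ j ∈ Set.Ioc ((i : ℚ) - 1) ((i : ℚ)), g j = ∑ j ∈ U, g j := by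
    rw [← finsum_mem_coe_finset]
    apply finsum_mem_inter_support_eq
    ext x
    simp only [Set.mem_inter_iff, Function.mem_support]
    constructor
    · rintro ⟨hx, hgx⟩
      refine ⟨?_, hgx⟩
      rw [Finset.mem_coe, hU, Finset.mem_filter]
      refine ⟨?_, hx⟩
      have : ∃ k ∈ Finset.range (d + 2), (-1:ℚ)^k * ((d+1).choose k) * DCf (x - k) ≠ 0 := by
        by_contra hc
        push_neg at hc
        apply hgx
        rw [hg]
        exact Finset.sum_eq_zero hc
      obtain ⟨k, hk, hterm⟩ := this
      have hD : DCf (x - k) ≠ 0 := by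
        intro h0; apply hterm; rw [h0, mul_zero]
      have hx1 : x - (k : ℚ) ≤ (i : ℚ) := by
        have : (0:ℚ) ≤ (k : ℚ) := by positivity
        have := hx.2
        linarith
      refine Finset.mem_biUnion.mpr ⟨k, hk, ?_⟩
      refine Finset.mem_image.mpr ⟨x - k, ?_, by ring⟩
      rw [hT0, Set.Finite.mem_toFinset]
      exact ⟨hD, hx1⟩
    · rintro ⟨hxU, hgx⟩
      rw [Finset.mem_coe, hU, Finset.mem_filter] at hxU
      exact ⟨hxU.2, hgx⟩
  rw [hfin, hLHS]
  have hswap : ∑ j ∈ U, g j = ∑ k ∈ Finset.range (d + 2),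
      ∑ j ∈ U, (-1:ℚ)^k * ((d+1).choose k) * DCf (j - k) := by
    rw [← Finset.sum_comm]
    apply Finset.sum_congr rfl
    intro j _
    exact hg j
  rw [hswap]
  apply Finset.sum_congr rfl
  intro k hk
  rw [Finset.mem_range] at hk
  -- identify the inner sum with the core identity for n = i - k
  have himg : ∑ j ∈ U, DCf (j - k) = ∑ j' ∈ U.image (fun x => x - (k : ℚ)), DCf j' := by
    rw [Finset.sum_image (fun x _ y _ hxy => by linarith : ∀ x ∈ U, ∀ y ∈ U,
      x - (k : ℚ) = y - (k : ℚ) → x = y)]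
  have hUIoc : ∀ j ∈ U, (i : ℚ) - 1 < j ∧ j ≤ (i : ℚ) := by
    intro j hj
    rw [hU, Finset.mem_filter] at hj
    exact ⟨hj.2.1, hj.2.2⟩
  have hcore : ∑ j' ∈ U.image (fun x => x - (k : ℚ)), DCf j' = QCf (((i - k : ℤ) : ℚ)) := by
    apply core (i - k)
    · intro j' hj'
      obtain ⟨j, hj, rfl⟩ := Finset.mem_image.mp hj'
      obtain ⟨hj1, hj2⟩ := hUIoc j hj
      push_cast
      constructor <;> linarith
    · intro j' hj1 hj2 hD
      push_cast at hj1 hj2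
      refine Finset.mem_image.mpr ⟨j' + k, ?_, by ring⟩
      rw [hU, Finset.mem_filter]
      have hk0 : (0:ℚ) ≤ (k : ℚ) := by positivity
      refine ⟨?_, Set.mem_Ioc.mpr ⟨by linarith, by linarith⟩⟩
      refine Finset.mem_biUnion.mpr ⟨k, Finset.mem_range.mpr hk, ?_⟩
      refine Finset.mem_image.mpr ⟨j', ?_, rfl⟩
      rw [hT0, Set.Finite.mem_toFinset]
      exact ⟨Function.mem_support.mpr hD, Set.mem_Iic.mpr (by linarith)⟩
  exact (calc ∑ j ∈ U, (-1:ℚ)^k * ((d+1).choose k) * DCf (j - k)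
      = (-1:ℚ)^k * ((d+1).choose k) * ∑ j ∈ U, DCf (j - k) := by rw [Finset.mul_sum]
    _ = (-1:ℚ)^k * ((d+1).choose k) * QCf ((i : ℚ) - k) := by
        rw [himg, hcore]
        congr 1
        push_cast
        ring).symm
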